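/- Vanishing of a row of the minor matrix propagates to higher minors: if for some fixed i all minors α^{k+1}_{i,j} = 0 for j = k+1,…,r, and α^k ≠ 0, then α^j_{i,j} = 0 for all j with k+1 ≤ j ≤ r, j ≤ i. -/

import Mathlib

open Matrix

/-- `mnr A k i j` is the `k×k` minor of `A` on rows `1,…,k−1,i` and columns
`1,…,k−1,j` (positions are 1-indexed; `i j` are 0-indexed `Fin` values).
For `k = 0` this is the empty determinant `1`. -/
def mnr {R : Type*} [CommRing R] {n m : ℕ} (A : Matrix (Fin n) (Fin m) R) (k : ℕ)
    (i : Fin n) (j : Fin m) : R :=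
  Matrix.det (Matrix.of fun a b : Fin k =>
    A (if h : a.val < k - 1 ∧ a.val < n then ⟨a.val, h.2⟩ else i)
      (if h : b.val < k - 1 ∧ b.val < m then ⟨b.val, h.2⟩ else j))

/-- `lead A k` is the leading principal `k×k` minor `α^k` of `A`, with `α^0 = 1`. -/
def lead {R : Type*} [CommRing R] {n m : ℕ} (A : Matrix (Fin n) (Fin m) R) (k : ℕ) : R :=
  if h : 0 < k ∧ k ≤ n ∧ k ≤ m then
    mnr A k ⟨k - 1, by omega⟩ ⟨k - 1, by omega⟩ else 1

/-- Vanishing of a row of the minor matrix propagates to higher minors: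
if `α^{k+1}_{i,j} = 0` for `j = k+1,…,r` and `α^k ≠ 0`, then `α^j_{i,j} = 0`
for all `j` with `k+1 ≤ j ≤ r`, `j ≤ i`. -/
theorem zero_row_propagates {R : Type*} [CommRing R] [IsDomain R] {n m : ℕ}
    (A : Matrix (Fin n) (Fin m) R) (k r i : ℕ)
    (h1i : 1 ≤ i) (hin : i ≤ n) (hrn : r ≤ n) (hrm : r ≤ m)
    (hk : lead A k ≠ 0)
    (hrow : ∀ (j : ℕ) (h1 : k + 1 ≤ j) (h2 : j ≤ r),
      mnr A (k + 1) ⟨i - 1, by omega⟩ ⟨j - 1, by omega⟩ = 0) :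
    ∀ (j : ℕ) (h1 : k + 1 ≤ j) (h2 : j ≤ r) (h3 : j ≤ i),
      mnr A j ⟨i - 1, by omega⟩ ⟨j - 1, by omega⟩ = 0 := by
  intro j h1 h2 h3
  have hkr : k < r := by omega
  have hkn : k < n := by omega
  have hkm : k < m := by omega
  set K := FractionRing R with hK
  set f : R →+* K := algebraMap R K with hfdef
  have hinj : Function.Injective f := IsFractionRing.injective R K
  set B : Matrix (Fin n) (Fin m) K := A.map f with hB
  set M : Matrix (Fin k) (Fin k) K :=
    Matrix.of (fun a b : Fin k => B ⟨a.val, by omega⟩ ⟨b.val, by omega⟩) with hM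
  -- the leading block has nonzero determinant
  have hMdet : M.det ≠ 0 := by
    have hMeq : M.det = f (lead A k) := by
      rcases Nat.eq_zero_or_pos k with h0 | h0
      · subst h0
        simp [lead, Matrix.det_fin_zero]
      · rw [lead, dif_pos ⟨h0, by omega, by omega⟩, mnr, RingHom.map_det]
        congr 1
        ext a b
        simp only [RingHom.mapMatrix_apply, Matrix.map_apply, Matrix.of_apply, hM, hB]
        refine congrArg f (congrArg₂ A ?_ ?_) <;> split_ifs <;>
          (simp only [Fin.mk.injEq]; try omega)
    rw [hMeq]
    intro h
    exact hk (hinj (by rw [h, map_zero]))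
  haveI : Invertible M := M.invertibleOfIsUnitDet (isUnit_iff_ne_zero.2 hMdet)
  set w : Fin k → K := fun b => B ⟨i - 1, by omega⟩ ⟨b.val, by omega⟩ with hw
  set c : Fin k → K := Matrix.vecMul w M⁻¹ with hc
  have hcM : Matrix.vecMul c M = w := by
    rw [hc, Matrix.vecMul_vecMul, Matrix.nonsing_inv_mul M (isUnit_iff_ne_zero.2 hMdet),
      Matrix.vecMul_one]
  -- the key linear relation
  have key : ∀ (cv : ℕ) (hcv : cv < r),
      B ⟨i - 1, by omega⟩ ⟨cv, by omega⟩
        = ∑ t : Fin k, c t * B ⟨t.val, by omega⟩ ⟨cv, by omega⟩ := by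
    intro cv hcv
    by_cases hck : cv < k
    · have := congrFun hcM ⟨cv, hck⟩
      simp only [Matrix.vecMul, dotProduct, hM, hw, Matrix.of_apply] at this
      rw [← this]
    · -- use the vanishing (k+1)-minor
      have h0 : mnr A (k + 1) ⟨i - 1, by omega⟩ ⟨cv, by omega⟩ = 0 :=
        hrow (cv + 1) (by omega) (by omega)
      set v : Matrix (Fin k) (Fin 1) K :=
        Matrix.of (fun a _ => B ⟨a.val, by omega⟩ ⟨cv, by omega⟩) with hv
      set w' : Matrix (Fin 1) (Fin k) K :=
        Matrix.of (fun _ b => B ⟨i - 1, by omega⟩ ⟨b.val, by omega⟩) with hw'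
      set x : Matrix (Fin 1) (Fin 1) K :=
        Matrix.of (fun _ _ => B ⟨i - 1, by omega⟩ ⟨cv, by omega⟩) with hx
      have hNdet : (Matrix.fromBlocks M v w' x).det = 0 := by
        have hsub : ((Matrix.of fun a b : Fin (k+1) =>
            A (if h : a.val < (k+1) - 1 ∧ a.val < n then ⟨a.val, h.2⟩ else ⟨i - 1, by omega⟩)
              (if h : b.val < (k+1) - 1 ∧ b.val < m then ⟨b.val, h.2⟩ else ⟨cv, by omega⟩)).map f).submatrix
              (finSumFinEquiv (m := k) (n := 1)) (finSumFinEquiv (m := k) (n := 1))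
            = Matrix.fromBlocks M v w' x := by
          ext ab cd
          rcases ab with a | a <;> rcases cd with b | b <;>
            simp only [Matrix.submatrix_apply, finSumFinEquiv_apply_left,
              finSumFinEquiv_apply_right, Matrix.map_apply, Matrix.of_apply,
              Matrix.fromBlocks_apply₁₁, Matrix.fromBlocks_apply₁₂,
              Matrix.fromBlocks_apply₂₁, Matrix.fromBlocks_apply₂₂,
              hM, hv, hw', hx, hB, Fin.coe_castAdd, Fin.coe_natAdd] <;>
            refine congrArg f (congrArg₂ A ?_ ?_) <;> split_ifs <;>
              (simp only [Fin.mk.injEq]; try omega)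
        rw [← hsub, Matrix.det_submatrix_equiv_self, ← RingHom.mapMatrix_apply, ← RingHom.map_det]
        rw [show (Matrix.of fun a b : Fin (k+1) =>
            A (if h : a.val < (k+1) - 1 ∧ a.val < n then ⟨a.val, h.2⟩ else ⟨i - 1, by omega⟩)
              (if h : b.val < (k+1) - 1 ∧ b.val < m then ⟨b.val, h.2⟩ else ⟨cv, by omega⟩)).det
          = mnr A (k+1) ⟨i - 1, by omega⟩ ⟨cv, by omega⟩ from rfl, h0, map_zero]
      rw [Matrix.det_fromBlocks₁₁] at hNdet
      have h2' : (x - w' * ⅟M * v).det = 0 := by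
        rcases mul_eq_zero.1 hNdet with h | h
        · exact absurd h hMdet
        · exact h
      rw [Matrix.det_fin_one, Matrix.sub_apply, sub_eq_zero, Matrix.invOf_eq_nonsing_inv] at h2'
      rw [show x 0 0 = B ⟨i - 1, by omega⟩ ⟨cv, by omega⟩ from rfl] at h2'
      rw [h2']
      simp only [Matrix.mul_apply, hc, Matrix.vecMul, dotProduct, Finset.sum_mul,
        hv, hw', hw, Matrix.of_apply]
      exact Finset.sum_congr rfl fun _ _ => Finset.sum_mul _ _ _
  -- now show the j×j minor vanishes
  apply hinj
  rw [map_zero, mnr, RingHom.map_det]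
  set Bj : Matrix (Fin j) (Fin j) K := ((Matrix.of fun a b : Fin j =>
      A (if h : a.val < j - 1 ∧ a.val < n then ⟨a.val, h.2⟩ else ⟨i - 1, by omega⟩)
        (if h : b.val < j - 1 ∧ b.val < m then ⟨b.val, h.2⟩ else ⟨j - 1, by omega⟩)).map f) with hBj
  show Bj.det = 0
  rw [← Matrix.exists_vecMul_eq_zero_iff]
  refine ⟨fun t => if ht : t.val < k then c ⟨t.val, ht⟩ else if t.val = j - 1 then -1 else 0,
    ?_, ?_⟩
  · intro hg0
    have h' := congrFun hg0 ⟨j - 1, by omega⟩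
    simp only [Pi.zero_apply] at h'
    rw [dif_neg (by omega)] at h'
    simp at h'
  · funext b
    have hBjent : ∀ t : Fin j, Bj t b
        = B (if t.val < j - 1 then ⟨t.val, by omega⟩ else ⟨i - 1, by omega⟩) ⟨b.val, by omega⟩ := by
      intro t
      simp only [hBj, Matrix.map_apply, Matrix.of_apply, hB]
      refine congrArg f (congrArg₂ A ?_ ?_) <;> split_ifs <;>
        (simp only [Fin.mk.injEq]; try omega)
    have hsum : ∀ t : Fin j,
        (if ht : t.val < k then c ⟨t.val, ht⟩ else if t.val = j - 1 then -1 else 0) * Bj t b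
        = (if ht : t.val < k then c ⟨t.val, ht⟩ * B ⟨t.val, by omega⟩ ⟨b.val, by omega⟩ else 0)
          + (if t = (⟨j - 1, by omega⟩ : Fin j) then -(B ⟨i - 1, by omega⟩ ⟨b.val, by omega⟩) else 0) := by
      intro t
      by_cases ht : t.val < k
      · rw [dif_pos ht, dif_pos ht, if_neg (by intro h; have hv : t.val = j - 1 := (by rw [h]); omega),
          hBjent t, if_pos (by omega), add_zero]
      · rw [dif_neg ht, dif_neg ht, zero_add]
        by_cases htj : t.val = j - 1
        · rw [if_pos htj, if_pos (Fin.ext htj), hBjent t, if_neg (by omega), neg_one_mul]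
        · rw [if_neg htj, if_neg (fun h => htj (by rw [h])), zero_mul]
    have hb' : (b : ℕ) < r := by omega
    have e2 : (∑ t : Fin j, if t = (⟨j - 1, by omega⟩ : Fin j)
          then -(B ⟨i - 1, by omega⟩ ⟨b.val, by omega⟩) else 0)
        = -(B ⟨i - 1, by omega⟩ ⟨b.val, by omega⟩) := by
      rw [Finset.sum_ite_eq' Finset.univ]
      simp
    have e1 : (∑ t : Fin j, if ht : t.val < k
          then c ⟨t.val, ht⟩ * B ⟨t.val, by omega⟩ ⟨b.val, by omega⟩ else 0)
        = B ⟨i - 1, by omega⟩ ⟨b.val, by omega⟩ := by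
      have hG : (∑ t : Fin j, if ht : t.val < k
            then c ⟨t.val, ht⟩ * B ⟨t.val, by omega⟩ ⟨b.val, by omega⟩ else 0)
          = ∑ t ∈ Finset.range j, (fun t' : ℕ => if ht : t' < k
            then c ⟨t', ht⟩ * B ⟨t', by omega⟩ ⟨b.val, by omega⟩ else 0) t := by
        rw [← Fin.sum_univ_eq_sum_range]
      have hG2 : (∑ t : Fin k, c t * B ⟨t.val, by omega⟩ ⟨b.val, by omega⟩)
          = ∑ t ∈ Finset.range k, (fun t' : ℕ => if ht : t' < k
            then c ⟨t', ht⟩ * B ⟨t', by omega⟩ ⟨b.val, by omega⟩ else 0) t := by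
        rw [← Fin.sum_univ_eq_sum_range]
        exact Finset.sum_congr rfl fun t _ => by rw [dif_pos t.isLt]
      have hsubset := Finset.sum_subset (Finset.range_subset_range.mpr (by omega : k ≤ j))
        (f := fun t' : ℕ => if ht : t' < k
            then c ⟨t', ht⟩ * B ⟨t', by omega⟩ ⟨b.val, by omega⟩ else 0)
        (fun x _ hnx => by rw [Finset.mem_range] at hnx; exact dif_neg hnx)
      rw [hG, ← hsubset, ← hG2, ← key b.val hb']
    have goal_eq : Matrix.vecMul (fun t : Fin j => if ht : t.val < k then c ⟨t.val, ht⟩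
          else if t.val = j - 1 then -1 else 0) Bj b
        = ∑ t : Fin j, (if ht : t.val < k then c ⟨t.val, ht⟩
          else if t.val = j - 1 then -1 else 0) * Bj t b := rfl
    simp only [Pi.zero_apply]
    rw [goal_eq, Finset.sum_congr rfl fun t _ => hsum t, Finset.sum_add_distrib, e1, e2]
    exact add_neg_cancel _
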